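/- Let s be a function of two variables, λ ∈ ℂ, x, y, z ∈ ℂ, and let F be a map satisfying the generating-function relation F(a, −s(b,a)) = (b, s(a,b)) for the two pairs (a,b) = (λx, z) and (a,b) = (z, λy). If z satisfies the midpoint equation s(λx, z) + s(λy, z) = 0, then F(F(λx, −s(z, λx))) = (λy, s(z, λy)). Consequently, if z = z(x,y) solves the midpoint equation for all (x,y) in a domain, the second iterate F∘F conjugated by the diagonal scaling Λ(x,u) = (λx, μu) maps (x, −μ⁻¹ s(z(x,y), λx)) to (y, μ⁻¹ s(z(x,y), λy)); i.e., the renormalization Λ⁻¹∘F∘F∘Λ is generated by the function s̃(x,y) = μ⁻¹ s(z(x,y), λy). -/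

import Mathlib

/-- If `z` solves the midpoint equation `s(λx, z) + s(λy, z) = 0`, then the second
iterate of the twist map `F` generated by `s` maps `(λx, -s(z, λx))` to
`(λy, s(z, λy))`; consequently the renormalization `Λ⁻¹ ∘ F ∘ F ∘ Λ`, with
`Λ(x,u) = (λx, μu)`, maps `(x, -μ⁻¹ s(z, λx))` to `(y, μ⁻¹ s(z, λy))`, i.e. it is
generated by `s̃(x,y) = μ⁻¹ s(z(x,y), λy)`. -/
theorem renormalized_map_generating_function
    (s : ℂ × ℂ → ℂ) (lam mu : ℂ) (hlam : lam ≠ 0) (hmu : mu ≠ 0)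
    (x y z : ℂ) (F : ℂ × ℂ → ℂ × ℂ)
    (h₁ : F (lam * x, -s (z, lam * x)) = (z, s (lam * x, z)))
    (h₂ : F (z, -s (lam * y, z)) = (lam * y, s (z, lam * y)))
    (hmid : s (lam * x, z) + s (lam * y, z) = 0) :
    F (F (lam * x, -s (z, lam * x))) = (lam * y, s (z, lam * y)) ∧
    ∀ Λ Λinv : ℂ × ℂ → ℂ × ℂ,
      (∀ p : ℂ × ℂ, Λ p = (lam * p.1, mu * p.2)) →
      (∀ p : ℂ × ℂ, Λinv p = (p.1 / lam, p.2 / mu)) →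
      Λinv (F (F (Λ (x, -(mu⁻¹ * s (z, lam * x))))))
        = (y, mu⁻¹ * s (z, lam * y)) := by
  have key : F (F (lam * x, -s (z, lam * x))) = (lam * y, s (z, lam * y)) := by
    rw [h₁]
    have : s (lam * x, z) = -s (lam * y, z) := by linear_combination hmid
    rw [this]
    simpa using h₂
  refine ⟨key, fun Λ Λinv hΛ hΛinv => ?_⟩
  rw [hΛ]
  rw [show (lam * (x, -(mu⁻¹ * s (z, lam * x))).1, mu * (x, -(mu⁻¹ * s (z, lam * x))).2) = (lam * x, -s (z, lam * x)) by field_simp, key, hΛinv]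
  field_simp
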